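/- Let n = 2 and suppose ∫_0^∞ f_1(s)² ds < ∞ while ∫_0^∞ f_2(s)² ds = ∞. Then the limiting matrix α_∞ has (α_∞)_{1,1} = (∫_0^∞ f_1(s)² ds)⁻¹ and all its other entries equal to zero. -/

import Mathlib

open MeasureTheory Filter Topology Matrix

theorem alphaInf_structure_dim_two
    (f : ℝ → Fin 2 → ℝ)
    (hf_meas : ∀ i, Measurable fun s => f s i)
    (hf_loc : ∀ i, ∀ t > (0 : ℝ), IntegrableOn (fun s => (f s i) ^ 2) (Set.Ioc 0 t))
    (hf1_L2 : IntegrableOn (fun s => (f s 0) ^ 2) (Set.Ioi 0))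
    (hf2_notL2 : ¬ IntegrableOn (fun s => (f s 1) ^ 2) (Set.Ioi 0))
    (m : ℝ → Matrix (Fin 2) (Fin 2) ℝ)
    (hm : ∀ t, m t = Matrix.of fun i j => ∫ s in Set.Ioc 0 t, f s i * f s j)
    (hm_inv : ∀ t > (0 : ℝ), IsUnit (m t))
    (α : ℝ → Matrix (Fin 2) (Fin 2) ℝ)
    (hα : ∀ t, α t = (m t)⁻¹)
    (A : Matrix (Fin 2) (Fin 2) ℝ)
    (hA : ∀ i j, Tendsto (fun t => α t i j) atTop (𝓝 (A i j))) :
    A 0 0 = (∫ s in Set.Ioi 0, (f s 0) ^ 2)⁻¹ ∧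
    A 0 1 = 0 ∧ A 1 0 = 0 ∧ A 1 1 = 0 := by
  set a : ℝ → ℝ := fun t => ∫ s in Set.Ioc 0 t, (f s 0) ^ 2 with ha_def
  set b : ℝ → ℝ := fun t => ∫ s in Set.Ioc 0 t, f s 0 * f s 1 with hb_def
  set d : ℝ → ℝ := fun t => ∫ s in Set.Ioc 0 t, (f s 1) ^ 2 with hd_def
  set L : ℝ := ∫ s in Set.Ioi 0, (f s 0) ^ 2 with hL_def
  -- integrability on all Ioc 0 t (including t ≤ 0)
  have hIoc : ∀ (g : ℝ → ℝ), (∀ t > (0:ℝ), IntegrableOn g (Set.Ioc 0 t)) →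
      ∀ t, IntegrableOn g (Set.Ioc 0 t) := by
    intro g hg t
    rcases le_or_gt t 0 with h | h
    · rw [Set.Ioc_eq_empty (not_lt.mpr h)]; simp
    · exact hg t h
  have hf0i : ∀ t, IntegrableOn (fun s => (f s 0) ^ 2) (Set.Ioc 0 t) := hIoc _ (hf_loc 0)
  have hf1i : ∀ t, IntegrableOn (fun s => (f s 1) ^ 2) (Set.Ioc 0 t) := hIoc _ (hf_loc 1)
  have hprodi : ∀ t, IntegrableOn (fun s => f s 0 * f s 1) (Set.Ioc 0 t) := by
    apply hIoc
    intro t ht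
    have h1 := hf_loc 0 t ht
    have h2 := hf_loc 1 t ht
    have h3 : IntegrableOn (fun s => (f s 0)^2 + (f s 1)^2) (Set.Ioc 0 t) := h1.add h2
    have h4 : AEStronglyMeasurable (fun s => f s 0 * f s 1)
        (volume.restrict (Set.Ioc 0 t)) := ((hf_meas 0).mul (hf_meas 1)).aestronglyMeasurable
    refine h3.mono' h4 ?_
    filter_upwards with s
    rw [Real.norm_eq_abs, abs_mul]
    nlinarith [sq_nonneg (|f s 0| - |f s 1|), sq_abs (f s 0), sq_abs (f s 1),
      abs_nonneg (f s 0), abs_nonneg (f s 1)]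
  -- matrix entries
  have hm00 : ∀ t, m t 0 0 = a t := by
    intro t; rw [hm t]; simp only [Matrix.of_apply, ← pow_two]; rfl
  have hm11 : ∀ t, m t 1 1 = d t := by
    intro t; rw [hm t]; simp only [Matrix.of_apply, ← pow_two]; rfl
  have hm01 : ∀ t, m t 0 1 = b t := by
    intro t; rw [hm t]; simp only [Matrix.of_apply]; rfl
  have hm10 : ∀ t, m t 1 0 = b t := by
    intro t; rw [hm t]; simp only [Matrix.of_apply, hb_def]
    congr 1; ext s; ring
  have hdet : ∀ t, (m t).det = a t * d t - b t * b t := by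
    intro t; rw [Matrix.det_fin_two, hm00, hm01, hm10, hm11]
  have hdet_ne : ∀ t, 0 < t → a t * d t - b t * b t ≠ 0 := by
    intro t ht
    rw [← hdet t]
    exact ((Matrix.isUnit_iff_isUnit_det _).mp (hm_inv t ht)).ne_zero
  have hMinv : ∀ (M : Matrix (Fin 2) (Fin 2) ℝ),
      M⁻¹ 0 0 = M.det⁻¹ * M 1 1 ∧ M⁻¹ 0 1 = M.det⁻¹ * (-(M 0 1)) ∧
      M⁻¹ 1 0 = M.det⁻¹ * (-(M 1 0)) ∧ M⁻¹ 1 1 = M.det⁻¹ * M 0 0 := by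
    intro M
    rw [Matrix.inv_def, Matrix.adjugate_fin_two]
    refine ⟨?_, ?_, ?_, ?_⟩ <;> simp [Ring.inverse_eq_inv']
  -- basic facts
  have hd_nonneg : ∀ t, 0 ≤ d t := fun t =>
    setIntegral_nonneg measurableSet_Ioc (fun s _ => sq_nonneg _)
  have ha_nonneg : ∀ t, 0 ≤ a t := fun t =>
    setIntegral_nonneg measurableSet_Ioc (fun s _ => sq_nonneg _)
  have hU : (⋃ t : ℝ, Set.Ioc (0:ℝ) t) = Set.Ioi 0 := by
    ext x
    simp only [Set.mem_iUnion, Set.mem_Ioc, Set.mem_Ioi]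
    exact ⟨fun ⟨t, h, _⟩ => h, fun h => ⟨x, h, le_refl x⟩⟩
  have haL : Tendsto a atTop (𝓝 L) := by
    have := tendsto_setIntegral_of_monotone (f := fun s => (f s 0) ^ 2) (μ := volume)
      (s := fun t : ℝ => Set.Ioc 0 t) (fun t => measurableSet_Ioc)
      (fun s t hst => Set.Ioc_subset_Ioc_right hst) (hU ▸ hf1_L2)
    rwa [hU] at this
  have ha_le_L : ∀ t, a t ≤ L := by
    intro t
    exact setIntegral_mono_set hf1_L2 (Filter.Eventually.of_forall fun s => sq_nonneg _)
      ((Set.Ioc_subset_Ioi_self).eventuallyLE)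
  have hd_mono : Monotone d := by
    intro s t hst
    exact setIntegral_mono_set (hf1i t) (Filter.Eventually.of_forall fun s => sq_nonneg _)
      ((Set.Ioc_subset_Ioc_right hst).eventuallyLE)
  have hd_top : Tendsto d atTop atTop := by
    rw [tendsto_atTop_atTop_iff_of_monotone hd_mono]
    by_contra h
    push_neg at h
    obtain ⟨B, hB⟩ := h
    apply hf2_notL2
    apply integrableOn_Ioi_of_intervalIntegral_norm_bounded (μ := volume)
      (l := (atTop : Filter ℝ)) (b := fun t : ℝ => t) B 0 hf1i tendsto_id
    filter_upwards [eventually_ge_atTop (0:ℝ)] with t ht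
    rw [intervalIntegral.integral_of_le ht]
    have : (∫ x in Set.Ioc 0 t, ‖(f x 1) ^ 2‖) = d t := by
      rw [hd_def]
      congr 1; ext s
      rw [Real.norm_eq_abs, abs_of_nonneg (sq_nonneg _)]
    rw [this]
    exact (hB t).le
  have hL_pos : 0 < L := by
    have ha1 : 0 < a 1 := by
      rcases eq_or_lt_of_le (ha_nonneg 1) with h | h
      · exfalso
        have hz : (fun s => (f s 0) ^ 2) =ᵐ[volume.restrict (Set.Ioc (0:ℝ) 1)] 0 := by
          rw [← integral_eq_zero_iff_of_nonneg (fun s => sq_nonneg _) (hf0i 1)]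
          exact h.symm
        have hz' : (fun s => f s 0 * f s 1) =ᵐ[volume.restrict (Set.Ioc (0:ℝ) 1)] 0 := by
          filter_upwards [hz] with s hs
          have : f s 0 = 0 := by
            have : (f s 0) ^ 2 = 0 := hs
            exact (pow_eq_zero_iff two_ne_zero).mp this
          simp [this]
        have hb1 : b 1 = 0 := by
          rw [hb_def]
          exact integral_eq_zero_of_ae hz'
        have ha1 : a 1 = 0 := h.symm
        exact hdet_ne 1 one_pos (by rw [ha1, hb1]; ring)
      · exact h
    have : a 1 ≤ L := ha_le_L 1
    linarith
  have hL_ne : L ≠ 0 := ne_of_gt hL_pos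
  -- splitting of integrals
  have hsplit : ∀ (g : ℝ → ℝ), (∀ u, IntegrableOn g (Set.Ioc 0 u)) →
      ∀ t0 t : ℝ, 0 ≤ t0 → t0 ≤ t →
      (∫ s in Set.Ioc 0 t, g s) = (∫ s in Set.Ioc 0 t0, g s) + ∫ s in Set.Ioc t0 t, g s := by
    intro g hg t0 t h0 ht
    rw [← setIntegral_union (Set.Ioc_disjoint_Ioc_of_le le_rfl) measurableSet_Ioc
      ((hg t0)) ((hg t).mono_set (Set.Ioc_subset_Ioc_left h0)),
      Set.Ioc_union_Ioc_eq_Ioc h0 ht]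
  -- Cauchy-Schwarz type bound on increments
  have hbound : ∀ c : ℝ, 0 < c → ∀ t0 t : ℝ, 0 ≤ t0 → t0 ≤ t →
      2 * c * |b t - b t0| ≤ c ^ 2 * (a t - a t0) + (d t - d t0) := by
    intro c hc t0 t h0 ht
    have hb' : b t - b t0 = ∫ s in Set.Ioc t0 t, f s 0 * f s 1 := by
      simp only [hb_def]; rw [hsplit _ hprodi t0 t h0 ht]; ring
    have ha' : a t - a t0 = ∫ s in Set.Ioc t0 t, (f s 0) ^ 2 := by
      simp only [ha_def]; rw [hsplit _ hf0i t0 t h0 ht]; ring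
    have hd' : d t - d t0 = ∫ s in Set.Ioc t0 t, (f s 1) ^ 2 := by
      simp only [hd_def]; rw [hsplit _ hf1i t0 t h0 ht]; ring
    have hsub : Set.Ioc t0 t ⊆ Set.Ioc 0 t := Set.Ioc_subset_Ioc_left h0
    have hpi : IntegrableOn (fun s => f s 0 * f s 1) (Set.Ioc t0 t) :=
      (hprodi t).mono_set hsub
    have h0i : IntegrableOn (fun s => (f s 0) ^ 2) (Set.Ioc t0 t) :=
      (hf0i t).mono_set hsub
    have h1i : IntegrableOn (fun s => (f s 1) ^ 2) (Set.Ioc t0 t) :=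
      (hf1i t).mono_set hsub
    have step1 : |b t - b t0| ≤ ∫ s in Set.Ioc t0 t, |f s 0 * f s 1| := by
      rw [hb']
      have := norm_integral_le_integral_norm (μ := volume.restrict (Set.Ioc t0 t))
        (f := fun s => f s 0 * f s 1)
      simp only [Real.norm_eq_abs] at this
      exact this
    have step2 : (∫ s in Set.Ioc t0 t, 2 * c * |f s 0 * f s 1|) ≤
        ∫ s in Set.Ioc t0 t, (c ^ 2 * (f s 0) ^ 2 + (f s 1) ^ 2) := by
      apply integral_mono (hpi.abs.const_mul _) ((h0i.const_mul _).add h1i)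
      intro s
      simp only [Pi.add_apply]
      rw [abs_mul]
      nlinarith [sq_nonneg (c * |f s 0| - |f s 1|), sq_abs (f s 0), sq_abs (f s 1),
        abs_nonneg (f s 0), abs_nonneg (f s 1), hc]
    have step3 : (∫ s in Set.Ioc t0 t, 2 * c * |f s 0 * f s 1|) =
        2 * c * ∫ s in Set.Ioc t0 t, |f s 0 * f s 1| := integral_const_mul _ _
    have step4 : (∫ s in Set.Ioc t0 t, (c ^ 2 * (f s 0) ^ 2 + (f s 1) ^ 2)) =
        c ^ 2 * (a t - a t0) + (d t - d t0) := by
      rw [integral_add (h0i.const_mul _) h1i, integral_const_mul, ha', hd']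
    calc 2 * c * |b t - b t0| ≤ 2 * c * ∫ s in Set.Ioc t0 t, |f s 0 * f s 1| := by
          apply mul_le_mul_of_nonneg_left step1 (by linarith)
      _ = ∫ s in Set.Ioc t0 t, 2 * c * |f s 0 * f s 1| := step3.symm
      _ ≤ _ := step2
      _ = _ := step4
  have hsqrt_top : Tendsto (fun t => Real.sqrt (d t)) atTop atTop := by
    rw [tendsto_atTop]
    intro B
    filter_upwards [hd_top.eventually (eventually_ge_atTop (B ^ 2))] with t ht
    calc B ≤ |B| := le_abs_self B
      _ = Real.sqrt (B ^ 2) := (Real.sqrt_sq_eq_abs B).symm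
      _ ≤ Real.sqrt (d t) := Real.sqrt_le_sqrt ht
  have hG : Tendsto (fun t => b t / Real.sqrt (d t)) atTop (𝓝 0) := by
    rw [Metric.tendsto_nhds]
    intro ε hε
    have h1 : ∀ᶠ t in atTop, L - (ε / 2) ^ 2 < a t :=
      haL.eventually (eventually_gt_nhds (by nlinarith))
    obtain ⟨t0, ht0a, ht0pos⟩ := (h1.and (eventually_ge_atTop (0:ℝ))).exists
    filter_upwards [eventually_ge_atTop t0,
      hsqrt_top.eventually (eventually_gt_atTop (2 * (|b t0| + 1) / ε)),
      hd_top.eventually (eventually_gt_atTop 1)] with t htt0 hsgt hdt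
    set s := Real.sqrt (d t) with hs_def
    have hs2 : s ^ 2 = d t := Real.sq_sqrt (hd_nonneg t)
    have hs_pos : 0 < s := Real.sqrt_pos.mpr (by linarith)
    set c := 2 * s / ε with hc_def
    have hc : 0 < c := by positivity
    have hεne : ε ≠ 0 := ne_of_gt hε
    have hce : c * ε = 2 * s := by rw [hc_def]; field_simp
    have hkey := hbound c hc t0 t ht0pos htt0
    have haa : a t - a t0 ≤ (ε / 2) ^ 2 := by
      have := ha_le_L t; linarith
    have hid : c ^ 2 * (ε / 2) ^ 2 = s ^ 2 := by rw [hc_def]; field_simp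
    have h2c : 2 * c * |b t - b t0| ≤ 2 * s ^ 2 := by
      have h3 : c ^ 2 * (a t - a t0) ≤ c ^ 2 * (ε / 2) ^ 2 :=
        mul_le_mul_of_nonneg_left haa (sq_nonneg c)
      have h4 : 0 ≤ d t0 := hd_nonneg t0
      have h5 : d t = s ^ 2 := hs2.symm
      linarith
    have hΔb : |b t - b t0| ≤ ε / 2 * s := by
      nlinarith [abs_nonneg (b t - b t0), mul_pos hs_pos hε]
    have hb0 : |b t0| + 1 < ε / 2 * s := by
      have hidd : ε / 2 * (2 * (|b t0| + 1) / ε) = |b t0| + 1 := by field_simp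
      calc |b t0| + 1 = ε / 2 * (2 * (|b t0| + 1) / ε) := hidd.symm
        _ < ε / 2 * s := by
            apply mul_lt_mul_of_pos_left hsgt (by linarith)
    have hbt : |b t| < ε * s := by
      have := abs_sub_abs_le_abs_sub (b t) (b t0)
      linarith
    rw [Real.dist_eq, sub_zero, abs_div, abs_of_pos hs_pos, div_lt_iff₀ hs_pos]
    linarith [hbt]
  have hdpos : ∀ᶠ t in atTop, (0:ℝ) < d t := hd_top.eventually (eventually_gt_atTop 0)
  have hbsq : Tendsto (fun t => b t ^ 2 / d t) atTop (𝓝 0) := by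
    have heq : (fun t => (b t / Real.sqrt (d t)) ^ 2) =ᶠ[atTop] fun t => b t ^ 2 / d t := by
      filter_upwards [hdpos] with t hdt
      rw [div_pow, Real.sq_sqrt hdt.le]
    have h2 : Tendsto (fun t => (b t / Real.sqrt (d t)) ^ 2) atTop (𝓝 0) := by
      have := hG.mul hG
      rw [mul_zero] at this
      refine this.congr (fun t => ?_)
      rw [pow_two]
    exact h2.congr' heq
  have hF : Tendsto (fun t => a t - b t ^ 2 / d t) atTop (𝓝 L) := by
    have := haL.sub hbsq
    simpa using this
  have hFinv : Tendsto (fun t => (a t - b t ^ 2 / d t)⁻¹) atTop (𝓝 L⁻¹) := hF.inv₀ hL_ne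
  have hdinv : Tendsto (fun t => (d t)⁻¹) atTop (𝓝 0) := hd_top.inv_tendsto_atTop
  have hsdinv : Tendsto (fun t => (Real.sqrt (d t))⁻¹) atTop (𝓝 0) :=
    hsqrt_top.inv_tendsto_atTop
  have hbd : Tendsto (fun t => b t / d t) atTop (𝓝 0) := by
    have heq : (fun t => (b t / Real.sqrt (d t)) * (Real.sqrt (d t))⁻¹) =ᶠ[atTop]
        fun t => b t / d t := by
      filter_upwards [hdpos] with t hdt
      have hs : (0:ℝ) < Real.sqrt (d t) := Real.sqrt_pos.mpr hdt
      rw [show b t / Real.sqrt (d t) * (Real.sqrt (d t))⁻¹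
        = b t / (Real.sqrt (d t) * Real.sqrt (d t)) by ring, Real.mul_self_sqrt hdt.le]
    have := hG.mul hsdinv
    rw [mul_zero] at this
    exact this.congr' heq
  have had : Tendsto (fun t => a t / d t) atTop (𝓝 0) := by
    have := haL.mul hdinv
    rw [mul_zero] at this
    refine this.congr (fun t => ?_)
    rw [div_eq_mul_inv]
  -- rewrite of F
  have hFrw : ∀ t, 0 < t → 0 < d t →
      a t - b t ^ 2 / d t = (a t * d t - b t * b t) / d t := by
    intro t ht hdt
    field_simp
    try ring
  have hα00' : (fun t => α t 0 0) =ᶠ[atTop] fun t => (a t - b t ^ 2 / d t)⁻¹ := by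
    filter_upwards [eventually_gt_atTop (0:ℝ), hdpos] with t ht hdt
    rw [hα t, (hMinv (m t)).1, hdet t, hm11 t, hFrw t ht hdt, inv_div, div_eq_mul_inv,
      mul_comm]
  have hα01' : (fun t => α t 0 1) =ᶠ[atTop]
      fun t => -(b t / d t) * (a t - b t ^ 2 / d t)⁻¹ := by
    filter_upwards [eventually_gt_atTop (0:ℝ), hdpos] with t ht hdt
    rw [hα t, (hMinv (m t)).2.1, hdet t, hm01 t, hFrw t ht hdt, inv_div]
    rw [div_eq_mul_inv, div_eq_mul_inv]
    have h1 := hdet_ne t ht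
    have h2 : d t ≠ 0 := ne_of_gt hdt
    field_simp
    try ring
  have hα10' : (fun t => α t 1 0) =ᶠ[atTop]
      fun t => -(b t / d t) * (a t - b t ^ 2 / d t)⁻¹ := by
    filter_upwards [eventually_gt_atTop (0:ℝ), hdpos] with t ht hdt
    rw [hα t, (hMinv (m t)).2.2.1, hdet t, hm10 t, hFrw t ht hdt, inv_div]
    rw [div_eq_mul_inv, div_eq_mul_inv]
    have h1 := hdet_ne t ht
    have h2 : d t ≠ 0 := ne_of_gt hdt
    field_simp
    try ring
  have hα11' : (fun t => α t 1 1) =ᶠ[atTop]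
      fun t => (a t / d t) * (a t - b t ^ 2 / d t)⁻¹ := by
    filter_upwards [eventually_gt_atTop (0:ℝ), hdpos] with t ht hdt
    rw [hα t, (hMinv (m t)).2.2.2, hdet t, hm00 t, hFrw t ht hdt, inv_div]
    rw [div_eq_mul_inv, div_eq_mul_inv]
    have h1 := hdet_ne t ht
    have h2 : d t ≠ 0 := ne_of_gt hdt
    field_simp
    try ring
  have t00 : Tendsto (fun t => α t 0 0) atTop (𝓝 L⁻¹) := hFinv.congr' hα00'.symm
  have t01 : Tendsto (fun t => α t 0 1) atTop (𝓝 0) := by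
    have := hbd.neg.mul hFinv
    rw [neg_zero, zero_mul] at this
    exact this.congr' hα01'.symm
  have t10 : Tendsto (fun t => α t 1 0) atTop (𝓝 0) := by
    have := hbd.neg.mul hFinv
    rw [neg_zero, zero_mul] at this
    exact this.congr' hα10'.symm
  have t11 : Tendsto (fun t => α t 1 1) atTop (𝓝 0) := by
    have := had.mul hFinv
    rw [zero_mul] at this
    exact this.congr' hα11'.symm
  exact ⟨tendsto_nhds_unique (hA 0 0) t00, tendsto_nhds_unique (hA 0 1) t01,
    tendsto_nhds_unique (hA 1 0) t10, tendsto_nhds_unique (hA 1 1) t11⟩
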